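/- arXiv:1212.1746 — 6 statements merged into one kernel-verified Lean document; each statement's English description precedes it below -/
import Mathlib

section
/- Let Ω ⊆ ℂ be open and let q, p : Ω → ℂ be holomorphic functions satisfying q'(x) = p(x) − q(x)² − x/2 and p'(x) = 2q(x)p(x) + α + 1/2 on Ω, with p(x) ≠ 0 for all x ∈ Ω. Then p satisfies the thirty-fourth Painlevé equation p''(x) = (p'(x))²/(2p(x)) + 2p(x)² − x·p(x) − β/(2p(x)) on Ω, where β = (α + 1/2)². -/
/-- If holomorphic `q, p` on an open set `Ω ⊆ ℂ` satisfy Hamilton's equations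
`q' = p - q² - x/2` and `p' = 2qp + α + 1/2`, and `p` is nowhere zero on `Ω`,
then `p` satisfies the thirty-fourth Painlevé equation
`p'' = (p')²/(2p) + 2p² - x p - β/(2p)` with `β = (α + 1/2)²` on `Ω`. -/
theorem painleve34_from_hamiltonian_system
    (Ω : Set ℂ) (hΩ : IsOpen Ω) (α : ℂ) (q p : ℂ → ℂ)
    (hq : ∀ x ∈ Ω, HasDerivAt q (p x - q x ^ 2 - x / 2) x)
    (hp : ∀ x ∈ Ω, HasDerivAt p (2 * q x * p x + α + 1 / 2) x)
    (hp0 : ∀ x ∈ Ω, p x ≠ 0) :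
    ∀ x ∈ Ω, HasDerivAt (deriv p)
      ((deriv p x) ^ 2 / (2 * p x) + 2 * p x ^ 2 - x * p x
        - (α + 1 / 2) ^ 2 / (2 * p x)) x := by
  intro x hx
  have hg : HasDerivAt (fun y => 2 * q y * p y + α + 1 / 2)
      ((p x - q x ^ 2 - x / 2) * p x * 2 + 2 * q x * (2 * q x * p x + α + 1 / 2)) x := by
    have h1 : HasDerivAt (fun y => 2 * q y) ((p x - q x ^ 2 - x / 2) * 2) x := by
      simpa [mul_comm] using (hq x hx).const_mul 2
    have h2 := (h1.mul (hp x hx)).add_const (α + 1 / 2)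
    convert h2 using 1
    · rfl
    · rfl
    · funext y; simp only [Pi.mul_apply]; ring
    · ring
  have heq : deriv p =ᶠ[nhds x] fun y => 2 * q y * p y + α + 1 / 2 := by
    filter_upwards [hΩ.mem_nhds hx] with y hy using (hp y hy).deriv
  have hmain := hg.congr_of_eventuallyEq heq
  convert hmain using 1
  · rfl
  · rfl
  have hdp : deriv p x = 2 * q x * p x + α + 1 / 2 := (hp x hx).deriv
  have h0 := hp0 x hx
  rw [hdp]
  field_simp
  ring
end

section
/- Let Ω ⊆ ℂ ∖ {0} be open and let u, v : Ω → ℂ be holomorphic functions satisfying the Boutroux–Painlevé system with parameter α ∈ ℂ: u̇ = v − u² − 1/2 − u/(3z) and v̇ = 2uv + (2α+1)/(3z) − 2v/(3z). Define the energy E(z) := v(z)²/2 − u(z)²v(z) − v(z)/2. Then E is holomorphic on Ω and satisfies Ė(z) = −4E(z)/(3z) + (4α·v(z) − (2α+1)(2u(z)² + 1))/(6z) for all z ∈ Ω. -/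
/-- If holomorphic `u, v` on an open set `Ω ⊆ ℂ ∖ {0}` satisfy the
Boutroux–Painlevé system with parameter `α`, then the energy
`E = v²/2 - u²v - v/2` is holomorphic on `Ω` and satisfies
`Ė = -4E/(3z) + (4αv - (2α+1)(2u² + 1))/(6z)` on `Ω`. -/
theorem boutroux_energy_derivative
    (Ω : Set ℂ) (hΩ : IsOpen Ω) (hΩ0 : ∀ z ∈ Ω, z ≠ 0) (α : ℂ) (u v : ℂ → ℂ)
    (hu : ∀ z ∈ Ω, HasDerivAt u (v z - u z ^ 2 - 1 / 2 - u z / (3 * z)) z)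
    (hv : ∀ z ∈ Ω, HasDerivAt v
      (2 * u z * v z + (2 * α + 1) / (3 * z) - 2 * v z / (3 * z)) z)
    (E : ℂ → ℂ) (hE : ∀ z, E z = v z ^ 2 / 2 - u z ^ 2 * v z - v z / 2) :
    DifferentiableOn ℂ E Ω ∧
      ∀ z ∈ Ω, HasDerivAt E
        (-(4 * E z) / (3 * z) + (4 * α * v z - (2 * α + 1) * (2 * u z ^ 2 + 1)) / (6 * z)) z := by
  have key : ∀ z ∈ Ω, HasDerivAt E
      (-(4 * E z) / (3 * z) + (4 * α * v z - (2 * α + 1) * (2 * u z ^ 2 + 1)) / (6 * z)) z := by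
    intro z hz
    have hz0 := hΩ0 z hz
    have hu' := hu z hz
    have hv' := hv z hz
    have h : HasDerivAt (fun w => v w ^ 2 / 2 - u w ^ 2 * v w - v w / 2)
        ((2 * v z * (2 * u z * v z + (2 * α + 1) / (3 * z) - 2 * v z / (3 * z))) / 2
          - ((2 * u z * (v z - u z ^ 2 - 1 / 2 - u z / (3 * z))) * v z
            + u z ^ 2 * (2 * u z * v z + (2 * α + 1) / (3 * z) - 2 * v z / (3 * z)))
          - (2 * u z * v z + (2 * α + 1) / (3 * z) - 2 * v z / (3 * z)) / 2) z := by
      have h1 : HasDerivAt (fun w => v w ^ 2)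
          (2 * v z * (2 * u z * v z + (2 * α + 1) / (3 * z) - 2 * v z / (3 * z))) z := by
        simpa [mul_comm] using hv'.fun_pow 2
      have h2 : HasDerivAt (fun w => u w ^ 2)
          (2 * u z * (v z - u z ^ 2 - 1 / 2 - u z / (3 * z))) z := by
        simpa [mul_comm] using hu'.fun_pow 2
      exact ((h1.div_const 2).sub (h2.mul hv')).sub (hv'.div_const 2)
    have hEe : E = fun w => v w ^ 2 / 2 - u w ^ 2 * v w - v w / 2 := funext hE
    rw [hEe]
    convert h using 1
    simp only []
    set a := u z
    set b := v z
    rw [div_add_div _ _ (by simpa using hz0 : (3:ℂ)*z ≠ 0) (by simpa using hz0 : (6:ℂ)*z ≠ 0)]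
    rw [div_eq_iff (by simp [hz0] : (3:ℂ)*z*(6*z) ≠ 0)]
    field_simp
    ring
  refine ⟨fun z hz => ((key z hz).differentiableAt).differentiableWithinAt, key⟩
end

section
/- Let ε ∈ {1, −1}, let Ω ⊆ ℂ be open, and let y : Ω → ℂ be a holomorphic solution of the second Painlevé equation y'' = 2y³ + x·y + α with parameter α ∈ ℂ. Suppose D(x) := 2y(x)² + 2ε·y'(x) + x ≠ 0 for all x ∈ Ω. Then the Bäcklund transform ỹ(x) := −y(x) − (2α + ε)/D(x) is a holomorphic solution of the second Painlevé equation with parameter α + ε: ỹ'' = 2ỹ³ + x·ỹ + (α + ε) on Ω. -/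
/-- Bäcklund transformation of PII: if `y` is a holomorphic solution of
`y'' = 2y³ + xy + α` on an open set `Ω ⊆ ℂ`, `ε = ±1`, and
`D = 2y² + 2εy' + x` is nowhere zero on `Ω`, then `ỹ = -y - (2α + ε)/D` is a
holomorphic solution of PII with parameter `α + ε` on `Ω`. -/
theorem backlund_painleveII
    (ε : ℂ) (hε : ε = 1 ∨ ε = -1) (Ω : Set ℂ) (hΩ : IsOpen Ω) (α : ℂ)
    (y : ℂ → ℂ) (hy : DifferentiableOn ℂ y Ω)
    (hyeq : ∀ x ∈ Ω, HasDerivAt (deriv y) (2 * y x ^ 3 + x * y x + α) x)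
    (hD : ∀ x ∈ Ω, 2 * y x ^ 2 + 2 * ε * deriv y x + x ≠ 0) :
    DifferentiableOn ℂ
        (fun x => -y x - (2 * α + ε) / (2 * y x ^ 2 + 2 * ε * deriv y x + x)) Ω ∧
      ∀ x ∈ Ω,
        HasDerivAt
          (deriv fun x => -y x - (2 * α + ε) / (2 * y x ^ 2 + 2 * ε * deriv y x + x))
          (2 * (-y x - (2 * α + ε) / (2 * y x ^ 2 + 2 * ε * deriv y x + x)) ^ 3
            + x * (-y x - (2 * α + ε) / (2 * y x ^ 2 + 2 * ε * deriv y x + x))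
            + (α + ε)) x := by
  set c : ℂ := 2 * α + ε with hc
  set D : ℂ → ℂ := fun x => 2 * y x ^ 2 + 2 * ε * deriv y x + x with hDdef
  set P : ℂ → ℂ := fun x => 2 * y x ^ 3 + x * y x + α with hPdef
  set D1 : ℂ → ℂ := fun x => 4 * y x * deriv y x + 2 * ε * P x + 1 with hD1def
  have hY : ∀ x ∈ Ω, HasDerivAt y (deriv y x) x := fun x hx =>
    (hy.differentiableAt (hΩ.mem_nhds hx)).hasDerivAt
  -- derivative of D
  have hDd : ∀ x ∈ Ω, HasDerivAt D (D1 x) x := by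
    intro x hx
    have h1 := (((hY x hx).pow 2).const_mul 2).add
      (((hyeq x hx).const_mul (2 * ε)).add (hasDerivAt_id x))
    convert h1 using 1
    all_goals (try rfl)
    · ext t; simp [hDdef]; ring
    · simp [hD1def, hPdef]; ring
  -- derivative of ỹ
  set g : ℂ → ℂ := fun x => -deriv y x + c * D1 x / (D x) ^ 2 with hgdef
  have hG : ∀ x ∈ Ω,
      HasDerivAt (fun x => -y x - c / D x) (g x) x := by
    intro x hx
    have h1 := ((hY x hx).neg).sub ((hasDerivAt_const x c).div (hDd x hx) (hD x hx))
    convert h1 using 1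
    all_goals (try rfl)
    have hDx := hD x hx
    simp only [hgdef]; ring
  have hderiv : ∀ x ∈ Ω, deriv (fun x => -y x - c / D x) x = g x := fun x hx =>
    (hG x hx).deriv
  constructor
  · intro x hx
    exact ((hG x hx).differentiableAt).differentiableWithinAt
  · intro x hx
    have heq : (deriv fun x => -y x - c / D x) =ᶠ[nhds x] g :=
      Filter.eventuallyEq_of_mem (hΩ.mem_nhds hx) hderiv
    have hDx := hD x hx
    have hD2x : (D x) ^ 2 ≠ 0 := pow_ne_zero 2 hDx
    -- derivative of D1
    have hD1' : HasDerivAt D1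
        (4 * (deriv y x ^ 2 + y x * P x) +
          2 * ε * (6 * y x ^ 2 * deriv y x + y x + x * deriv y x)) x := by
      have hP' : HasDerivAt P (6 * y x ^ 2 * deriv y x + y x + x * deriv y x) x := by
        have h2 := (((hY x hx).pow 3).const_mul 2).add
          (((hasDerivAt_id x).mul (hY x hx)).add (hasDerivAt_const x α))
        convert h2 using 1
        all_goals (try rfl)
        · funext t; simp only [hPdef, id_eq, Pi.add_apply, Pi.mul_apply, Pi.pow_apply]; ring
        · simp only [id_eq]; ring
      have := ((((hY x hx).mul (hyeq x hx))).const_mul 4).add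
        ((hP'.const_mul (2 * ε)).add (hasDerivAt_const x 1))
      convert this using 1
      all_goals (try rfl)
      · ext t; simp [hD1def]; ring
      · simp [hPdef]; ring
    -- derivative of D^2
    have hD2' : HasDerivAt (fun t => (D t) ^ 2) (2 * D x * D1 x) x := by
      have := (hDd x hx).pow 2
      convert this using 1
      all_goals (try rfl)
      ring
    -- derivative of g
    have hg' : HasDerivAt g
        (-P x + ((c * (4 * (deriv y x ^ 2 + y x * P x) +
            2 * ε * (6 * y x ^ 2 * deriv y x + y x + x * deriv y x))) * (D x) ^ 2
          - (c * D1 x) * (2 * D x * D1 x)) / ((D x) ^ 2) ^ 2) x := by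
      exact ((hyeq x hx).neg).add ((hD1'.const_mul c).div hD2' hD2x)
    have key : HasDerivAt g
        (2 * (-y x - c / D x) ^ 3 + x * (-y x - c / D x) + (α + ε)) x := by
      convert hg' using 1
      all_goals (try rfl)
      have hDxx : D x = 2 * y x ^ 2 + 2 * ε * deriv y x + x := rfl
      have hD1xx : D1 x = 4 * y x * deriv y x + 2 * ε * P x + 1 := rfl
      have hPxx : P x = 2 * y x ^ 3 + x * y x + α := rfl
      rw [hD1xx, hPxx] at *
      rcases hε with h | h <;> subst h <;> (have hE0 : D x ≠ 0 := hDx) <;> generalize hE : D x = E at hE0 ⊢ <;> simp only [c] <;> field_simp <;> subst hE <;> simp only [D] <;> ring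
    exact key.congr_of_eventuallyEq heq
end

section
/- Let Ω ⊆ ℂ ∖ {0} be open. (i) If α = 1/2 and u : Ω → ℂ is a holomorphic solution of the Riccati equation u̇ = u² + 1/2 − u/(3z), then the pair (u, v) with v(z) = 2u(z)² + 1 satisfies the Boutroux–Painlevé system with parameter α = 1/2 on Ω. (ii) Conversely, if u, v : Ω → ℂ solve the Boutroux–Painlevé system with parameter α ∈ ℂ on Ω and v(z) = 2u(z)² + 1 for all z ∈ Ω, then α = 1/2 and u satisfies u̇ = u² + 1/2 − u/(3z) on Ω. -/
/-- (i) For `α = 1/2`, a holomorphic solution `u` of the Riccati equation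
`u̇ = u² + 1/2 - u/(3z)` on an open set `Ω ⊆ ℂ ∖ {0}` yields a solution
`(u, v = 2u² + 1)` of the Boutroux–Painlevé system with parameter `α = 1/2`.
(ii) Conversely, if `(u, v)` solve the Boutroux–Painlevé system with parameter
`α` on `Ω` and `v = 2u² + 1` on `Ω`, then `α = 1/2` and `u` satisfies the
Riccati equation `u̇ = u² + 1/2 - u/(3z)`. -/
theorem riccati_and_v_parabola_locus
    (Ω : Set ℂ) (hΩ : IsOpen Ω) (hΩ0 : ∀ z ∈ Ω, z ≠ 0) (hne : Ω.Nonempty) :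
    (∀ u : ℂ → ℂ,
      (∀ z ∈ Ω, HasDerivAt u (u z ^ 2 + 1 / 2 - u z / (3 * z)) z) →
      (∀ z ∈ Ω, HasDerivAt u
          ((fun w => 2 * u w ^ 2 + 1) z - u z ^ 2 - 1 / 2 - u z / (3 * z)) z) ∧
        (∀ z ∈ Ω, HasDerivAt (fun w => 2 * u w ^ 2 + 1)
          (2 * u z * (fun w => 2 * u w ^ 2 + 1) z + (2 * ((1 : ℂ) / 2) + 1) / (3 * z)
            - 2 * (fun w => 2 * u w ^ 2 + 1) z / (3 * z)) z)) ∧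
    (∀ (α : ℂ) (u v : ℂ → ℂ),
      (∀ z ∈ Ω, HasDerivAt u (v z - u z ^ 2 - 1 / 2 - u z / (3 * z)) z) →
      (∀ z ∈ Ω, HasDerivAt v
        (2 * u z * v z + (2 * α + 1) / (3 * z) - 2 * v z / (3 * z)) z) →
      (∀ z ∈ Ω, v z = 2 * u z ^ 2 + 1) →
      α = 1 / 2 ∧
        ∀ z ∈ Ω, HasDerivAt u (u z ^ 2 + 1 / 2 - u z / (3 * z)) z) := by
  constructor
  · intro u hu
    constructor
    · intro z hz
      convert hu z hz using 1
      ring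
    · intro z hz
      have hz0 : z ≠ 0 := hΩ0 z hz
      have h := (((hu z hz).pow 2).const_mul 2).add_const 1
      refine h.congr_deriv ?_
      field_simp
      ring
  · intro α u v hu hv hpar
    have hder : ∀ z ∈ Ω, HasDerivAt v
        (4 * u z * (v z - u z ^ 2 - 1 / 2 - u z / (3 * z))) z := by
      intro z hz
      have h := (((hu z hz).pow 2).const_mul 2).add_const 1
      have heq : v =ᶠ[nhds z] (fun w => 2 * u w ^ 2 + 1) :=
        Filter.eventuallyEq_of_mem (hΩ.mem_nhds hz) hpar
      have h' := h.congr_of_eventuallyEq heq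
      refine h'.congr_deriv ?_
      push_cast
      ring
    obtain ⟨z0, hz0⟩ := hne
    have hz00 : z0 ≠ 0 := hΩ0 z0 hz0
    have huniq := (hder z0 hz0).unique (hv z0 hz0)
    have hv0 : v z0 = 2 * u z0 ^ 2 + 1 := hpar z0 hz0
    have hα : α = 1 / 2 := by
      rw [hv0] at huniq
      field_simp at huniq
      have h12 : 12 * α * z0 - 6 * z0 = 0 := by linear_combination (-3 * z0) * huniq
      have h2 : α * (12 * z0) = (1 / 2) * (12 * z0) := by linear_combination h12
      exact mul_right_cancel₀ (mul_ne_zero (by norm_num) hz00) h2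
    refine ⟨hα, fun z hz => ?_⟩
    have := hu z hz
    rw [hpar z hz] at this
    convert this using 1
    ring
end

section
/- Let z₀ ∈ ℂ ∖ {0} and let y be a holomorphic solution of the Boutroux–Airy equation ÿ + ẏ/(3z) + y/2 = 0 on a neighborhood of z₀ not containing 0, with y(z₀) = 0 and ẏ(z₀) ≠ 0. Then u := ẏ/y, defined on a punctured neighborhood of z₀, is meromorphic with a simple pole at z₀ of residue 1, and lim_{z→z₀} ( u(z) − 1/(z − z₀) ) = −1/(6z₀). In particular, the corresponding Airy-type solution u of the Boutroux form of PII with α = −1/2 has a simple pole with residue 1 at each zero of y. -/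
/-- If `y` is a holomorphic solution of the Boutroux–Airy equation
`ÿ + ẏ/(3z) + y/2 = 0` near `z₀ ≠ 0` with `y(z₀) = 0` and `ẏ(z₀) ≠ 0`, then
`u = ẏ/y` is defined on a punctured neighbourhood of `z₀`, has a simple pole
at `z₀` with residue `1` (i.e. `(z - z₀)·u(z) → 1`), and
`u(z) - 1/(z - z₀) → -1/(6z₀)` as `z → z₀`. -/
theorem boutroux_airy_zero_gives_pole
    (Ω : Set ℂ) (hΩ : IsOpen Ω) (z₀ : ℂ) (hz₀ : z₀ ∈ Ω) (hΩ0 : ∀ z ∈ Ω, z ≠ 0)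
    (y : ℂ → ℂ) (hy : DifferentiableOn ℂ y Ω)
    (hyeq : ∀ z ∈ Ω, HasDerivAt (deriv y) (-(deriv y z / (3 * z)) - y z / 2) z)
    (hy0 : y z₀ = 0) (hy1 : deriv y z₀ ≠ 0) :
    (∀ᶠ z in nhdsWithin z₀ ({z₀}ᶜ : Set ℂ), y z ≠ 0) ∧
      Filter.Tendsto (fun z => (z - z₀) * (deriv y z / y z))
        (nhdsWithin z₀ ({z₀}ᶜ : Set ℂ)) (nhds 1) ∧
      Filter.Tendsto (fun z => deriv y z / y z - 1 / (z - z₀))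
        (nhdsWithin z₀ ({z₀}ᶜ : Set ℂ)) (nhds (-(1 / (6 * z₀)))) := by
  have hz0ne : z₀ ≠ 0 := hΩ0 z₀ hz₀
  have hmem : Ω ∈ nhds z₀ := hΩ.mem_nhds hz₀
  set g := dslope y z₀ with hgdef
  -- basic facts about g
  have hg : DifferentiableOn ℂ g Ω := (Complex.differentiableOn_dslope hmem).mpr hy
  have hgz₀ : g z₀ = deriv y z₀ := dslope_same y z₀
  have hgz₀ne : g z₀ ≠ 0 := hgz₀ ▸ hy1
  have hfac : ∀ z, y z = (z - z₀) * g z := by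
    intro z
    have h := sub_smul_dslope y z₀ z
    rw [hy0, sub_zero, smul_eq_mul] at h
    exact h.symm
  have hganalytic : AnalyticOnNhd ℂ g Ω := hg.analyticOnNhd hΩ
  have hdg : AnalyticAt ℂ (deriv g) z₀ := hganalytic.deriv z₀ hz₀
  have hgd : ∀ z ∈ Ω, HasDerivAt g (deriv g z) z := fun z hz =>
    (hg.differentiableAt (hΩ.mem_nhds hz)).hasDerivAt
  -- first derivative formula: y' = g + (z - z₀) g'
  have hy' : ∀ z ∈ Ω, deriv y z = g z + (z - z₀) * deriv g z := by
    intro z hz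
    have h1 : HasDerivAt (fun w => (w - z₀) * g w) (1 * g z + (z - z₀) * deriv g z) z :=
      ((hasDerivAt_id z).sub_const z₀).mul (hgd z hz)
    have h2 : HasDerivAt y (1 * g z + (z - z₀) * deriv g z) z :=
      h1.congr_of_eventuallyEq (Filter.Eventually.of_forall fun w => hfac w)
    rw [h2.deriv]; ring
  -- second derivative at z₀ : y'' (z₀) = 2 g'(z₀)
  have heq : deriv y =ᶠ[nhds z₀] fun w => g w + (w - z₀) * deriv g w := by
    filter_upwards [hmem] with w hw using hy' w hw
  have h3 : HasDerivAt (fun w => g w + (w - z₀) * deriv g w)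
      (deriv g z₀ + (1 * deriv g z₀ + (z₀ - z₀) * deriv (deriv g) z₀)) z₀ :=
    (hgd z₀ hz₀).add (((hasDerivAt_id z₀).sub_const z₀).mul hdg.differentiableAt.hasDerivAt)
  have h4 : HasDerivAt (deriv y) (2 * deriv g z₀) z₀ := by
    have h5 := h3.congr_of_eventuallyEq heq
    exact h5.congr_deriv (by ring)
  have huniq : 2 * deriv g z₀ = -(deriv y z₀ / (3 * z₀)) - y z₀ / 2 :=
    h4.unique (hyeq z₀ hz₀)
  have hkey : deriv g z₀ / g z₀ = -(1 / (6 * z₀)) := by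
    rw [hy0] at huniq
    rw [hgz₀]
    field_simp at huniq ⊢
    linear_combination (1/2 : ℂ) * huniq
  -- eventual nonvanishing of g near z₀
  have hgne : ∀ᶠ z in nhds z₀, g z ≠ 0 :=
    ((hganalytic z₀ hz₀).continuousAt).eventually_ne hgz₀ne
  have hgne' : ∀ᶠ z in nhdsWithin z₀ ({z₀}ᶜ : Set ℂ), g z ≠ 0 :=
    hgne.filter_mono nhdsWithin_le_nhds
  have hmem' : Ω ∈ nhdsWithin z₀ ({z₀}ᶜ : Set ℂ) := nhdsWithin_le_nhds hmem
  refine ⟨?_, ?_, ?_⟩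
  · filter_upwards [hgne', self_mem_nhdsWithin] with z hgz hz
    rw [hfac z]
    exact mul_ne_zero (sub_ne_zero.mpr hz) hgz
  · have hcy : ContinuousAt (deriv y) z₀ := (hyeq z₀ hz₀).differentiableAt.continuousAt
    have ht : Filter.Tendsto (fun z => deriv y z / g z)
        (nhdsWithin z₀ ({z₀}ᶜ : Set ℂ)) (nhds 1) := by
      have := (hcy.div (hganalytic z₀ hz₀).continuousAt hgz₀ne).tendsto
      simp only [Pi.div_apply] at this
      rw [hgz₀, div_self hy1] at this
      exact this.mono_left nhdsWithin_le_nhds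
    refine ht.congr' ?_ |>.mono_left le_rfl
    · filter_upwards [hgne', self_mem_nhdsWithin] with z hgz hz
      rw [hfac z]
      have hzne : z - z₀ ≠ 0 := sub_ne_zero.mpr hz
      field_simp
  · have ht : Filter.Tendsto (fun z => deriv g z / g z)
        (nhdsWithin z₀ ({z₀}ᶜ : Set ℂ)) (nhds (-(1 / (6 * z₀)))) := by
      have := (hdg.continuousAt.div (hganalytic z₀ hz₀).continuousAt hgz₀ne).tendsto
      simp only [Pi.div_apply] at this
      rw [hkey] at this
      exact this.mono_left nhdsWithin_le_nhds
    refine ht.congr' ?_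
    filter_upwards [hgne', hmem', self_mem_nhdsWithin] with z hgz hzΩ hz
    have hzne : z - z₀ ≠ 0 := sub_ne_zero.mpr hz
    rw [hy' z hzΩ, hfac z]
    field_simp
    ring
end

section
/- Let r > 0 and let u, v : {z ∈ ℂ : |z| > r} → ℂ be bounded holomorphic functions satisfying the Boutroux–Painlevé system with parameter α ∈ ℂ: u̇ = v − u² − 1/2 − u/(3z), v̇ = 2uv + (2α+1)/(3z) − 2v/(3z). Then the limits u∞ := lim_{|z|→∞} u(z) and v∞ := lim_{|z|→∞} v(z) exist, and (u∞, v∞) is an equilibrium point of the autonomous system: v∞ − u∞² − 1/2 = 0 and 2u∞·v∞ = 0; hence (u∞, v∞) ∈ {(0, 1/2), (i/√2, 0), (−i/√2, 0)}. -/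
open Filter Topology Complex

lemma comap_abs_neBot : (Filter.comap (fun z : ℂ => ‖z‖) Filter.atTop).NeBot := by
  refine Filter.comap_neBot fun t ht => ?_
  obtain ⟨a, ha⟩ := Filter.mem_atTop_sets.1 ht
  refine ⟨((max a 0 : ℝ) : ℂ), ha _ ?_⟩
  simp only [Complex.norm_real, Real.norm_eq_abs, _root_.abs_of_nonneg (le_max_right a 0)]
  exact le_max_left a 0

lemma aux_limit (r : ℝ) (hr : 0 < r) (f f' : ℂ → ℂ)
    (hf : ∀ z : ℂ, r < ‖z‖ → HasDerivAt f (f' z) z)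
    (hb : ∃ M : ℝ, ∀ z : ℂ, r < ‖z‖ → ‖f z‖ ≤ M) :
    ∃ L : ℂ, Tendsto f (comap (fun z : ℂ => ‖z‖) atTop) (𝓝 L) ∧
      Tendsto f' (comap (fun z : ℂ => ‖z‖) atTop) (𝓝 0) := by
  obtain ⟨M, hM⟩ := hb
  set s : Set ℂ := Metric.ball 0 r⁻¹ with hs
  have hmem : ∀ w : ℂ, w ∈ s \ {0} → r < ‖w⁻¹‖ := by
    intro w hw
    have hw0 : w ≠ 0 := hw.2
    have h1 : ‖w‖ < r⁻¹ := by
      simpa [Complex.dist_eq] using Metric.mem_ball.1 hw.1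
    have h2 : (0:ℝ) < ‖w‖ := norm_pos_iff.2 hw0
    rw [norm_inv]
    calc r = (r⁻¹)⁻¹ := (inv_inv r).symm
    _ < ‖w‖⁻¹ := by
        exact inv_strictAnti₀ h2 h1
  set g : ℂ → ℂ := fun w => f w⁻¹ with hg
  have hderiv : ∀ w : ℂ, w ∈ s \ {0} → HasDerivAt g (f' w⁻¹ * (-(w ^ 2)⁻¹)) w := by
    intro w hw
    exact (hf w⁻¹ (hmem w hw)).comp w (hasDerivAt_inv hw.2)
  have hdiff : DifferentiableOn ℂ g (s \ {0}) :=
    fun w hw => ((hderiv w hw).differentiableAt).differentiableWithinAt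
  have hbdd : BddAbove (norm ∘ g '' (s \ {0})) := by
    refine ⟨M, ?_⟩
    rintro x ⟨w, hw, rfl⟩
    exact hM _ (hmem w hw)
  have hsnhds : s ∈ 𝓝 (0:ℂ) := Metric.ball_mem_nhds 0 (by positivity)
  set G : ℂ → ℂ := Function.update g 0 (limUnder (𝓝[≠] (0:ℂ)) g) with hG
  have hGdiff : DifferentiableOn ℂ G s :=
    Complex.differentiableOn_update_limUnder_of_bddAbove hsnhds hdiff hbdd
  have hopen : IsOpen s := Metric.isOpen_ball
  have hGg : ∀ w : ℂ, w ≠ 0 → G w = g w := fun w hw => Function.update_of_ne hw _ _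
  -- tendsto of inversion
  have habs : Tendsto (fun z : ℂ => ‖z‖) (comap (fun z : ℂ => ‖z‖) atTop) atTop := tendsto_comap
  have hlarge : ∀ᶠ z : ℂ in comap (fun z : ℂ => ‖z‖) atTop, r < ‖z‖ :=
    habs.eventually (eventually_gt_atTop r)
  have hinv : Tendsto (fun z : ℂ => z⁻¹) (comap (fun z : ℂ => ‖z‖) atTop) (𝓝[≠] (0:ℂ)) := by
    refine tendsto_nhdsWithin_iff.2 ⟨?_, ?_⟩
    · rw [tendsto_zero_iff_norm_tendsto_zero]
      simpa [norm_inv, Pi.inv_def] using habs.inv_tendsto_atTop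
    · filter_upwards [hlarge] with z hz
      have : z ≠ 0 := fun h => by simp [h] at hz; linarith
      simpa using inv_ne_zero this
  -- limit of f
  have hGcont : ContinuousAt G 0 :=
    (hGdiff.differentiableAt (hopen.mem_nhds (Metric.mem_ball_self (by positivity)))).continuousAt
  have htendG : Tendsto G (𝓝[≠] (0:ℂ)) (𝓝 (G 0)) :=
    (hGcont.tendsto).mono_left nhdsWithin_le_nhds
  have hfL : Tendsto f (comap (fun z : ℂ => ‖z‖) atTop) (𝓝 (G 0)) := by
    have := htendG.comp hinv
    refine this.congr' ?_
    filter_upwards [hlarge] with z hz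
    have hz0 : z ≠ 0 := fun h => by simp [h] at hz; linarith
    simp only [Function.comp_apply]
    rw [hGg _ (inv_ne_zero hz0)]
    simp [hg, inv_inv]
  -- derivative tends to 0
  have hanal : AnalyticOnNhd ℂ G s := hGdiff.analyticOnNhd hopen
  have hderivCont : ContinuousAt (deriv G) 0 :=
    ((hanal.deriv 0 (Metric.mem_ball_self (by positivity))).continuousAt)
  -- f' z = -(z⁻¹)^2 * deriv G z⁻¹ for r < |z|
  have hkey : ∀ z : ℂ, r < ‖z‖ → f' z = -(z⁻¹) ^ 2 * deriv G z⁻¹ := by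
    intro z hz
    have hz0 : z ≠ 0 := fun h => by simp [h] at hz; linarith
    set w : ℂ := z⁻¹ with hw
    have hw0 : w ≠ 0 := inv_ne_zero hz0
    have hws : w ∈ s \ {0} := by
      constructor
      · rw [Metric.mem_ball, Complex.dist_eq, sub_zero, hw, norm_inv]
        have : (0:ℝ) < ‖z‖ := norm_pos_iff.2 hz0
        calc ‖z‖⁻¹ < r⁻¹ := inv_strictAnti₀ hr hz
        _ = r⁻¹ := rfl
      · exact hw0
    have h1 : HasDerivAt g (f' w⁻¹ * (-(w ^ 2)⁻¹)) w := hderiv w hws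
    have h2 : HasDerivAt G (f' w⁻¹ * (-(w ^ 2)⁻¹)) w := by
      refine h1.congr_of_eventuallyEq ?_
      filter_upwards [isOpen_ne.mem_nhds hw0] with x hx
      exact hGg x hx
    have h3 : deriv G w = f' w⁻¹ * (-(w ^ 2)⁻¹) := h2.deriv
    have hwz : w⁻¹ = z := by rw [hw, inv_inv]
    rw [hwz] at h3
    have hw2 : (w ^ 2 : ℂ) ≠ 0 := pow_ne_zero _ hw0
    rw [h3]
    field_simp
  have hf'0 : Tendsto f' (comap (fun z : ℂ => ‖z‖) atTop) (𝓝 0) := by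
    have hcont : Tendsto (fun w : ℂ => -w ^ 2 * deriv G w) (𝓝[≠] (0:ℂ)) (𝓝 0) := by
      have hc : ContinuousAt (fun w : ℂ => -w ^ 2 * deriv G w) 0 :=
        ((continuousAt_id.pow 2).neg.mul hderivCont)
      have := hc.tendsto.mono_left (nhdsWithin_le_nhds (s := {(0:ℂ)}ᶜ))
      simpa using this
    have := hcont.comp hinv
    refine this.congr' ?_
    filter_upwards [hlarge] with z hz
    simp only [Function.comp_apply]
    rw [hkey z hz]
  exact ⟨G 0, hfL, hf'0⟩

/-- Bounded holomorphic solutions of the Boutroux–Painlevé system on `{|z| > r}`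
have limits `u∞, v∞` as `|z| → ∞`, and `(u∞, v∞)` is an equilibrium point of the
autonomous system: `v∞ - u∞² - 1/2 = 0` and `2u∞v∞ = 0`; hence
`(u∞, v∞) ∈ {(0, 1/2), (i/√2, 0), (-i/√2, 0)}`. -/
theorem bounded_boutroux_solution_tendsto_equilibrium
    (r : ℝ) (hr : 0 < r) (α : ℂ) (u v : ℂ → ℂ)
    (hu : ∀ z : ℂ, r < ‖z‖ →
      HasDerivAt u (v z - u z ^ 2 - 1 / 2 - u z / (3 * z)) z)
    (hv : ∀ z : ℂ, r < ‖z‖ →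
      HasDerivAt v (2 * u z * v z + (2 * α + 1) / (3 * z) - 2 * v z / (3 * z)) z)
    (hub : ∃ M : ℝ, ∀ z : ℂ, r < ‖z‖ → ‖u z‖ ≤ M)
    (hvb : ∃ M : ℝ, ∀ z : ℂ, r < ‖z‖ → ‖v z‖ ≤ M) :
    ∃ uinf vinf : ℂ,
      Filter.Tendsto u (Filter.comap (fun z : ℂ => ‖z‖) Filter.atTop) (nhds uinf) ∧
      Filter.Tendsto v (Filter.comap (fun z : ℂ => ‖z‖) Filter.atTop) (nhds vinf) ∧
      vinf - uinf ^ 2 - 1 / 2 = 0 ∧ 2 * uinf * vinf = 0 ∧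
      ((uinf, vinf) = ((0 : ℂ), 1 / 2) ∨
        (uinf, vinf) = (Complex.I / (Real.sqrt 2 : ℂ), 0) ∨
        (uinf, vinf) = (-(Complex.I / (Real.sqrt 2 : ℂ)), 0)) := by
  have hNB : (Filter.comap (fun z : ℂ => ‖z‖) Filter.atTop).NeBot := comap_abs_neBot
  obtain ⟨uinf, huL, hu'0⟩ := aux_limit r hr u _ hu hub
  obtain ⟨vinf, hvL, hv'0⟩ := aux_limit r hr v _ hv hvb
  set l := Filter.comap (fun z : ℂ => ‖z‖) Filter.atTop with hl
  have habs : Tendsto (fun z : ℂ => ‖z‖) l atTop := tendsto_comap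
  have h3 : Tendsto (fun z : ℂ => (3 * z)⁻¹) l (𝓝 0) := by
    rw [tendsto_zero_iff_norm_tendsto_zero]
    have h3' : Tendsto (fun z : ℂ => ‖3 * z‖) l atTop := by
      have := habs.const_mul_atTop (show (0:ℝ) < 3 by norm_num)
      refine this.congr fun z => ?_
      simp only [norm_mul]
      norm_num
    have h3'' := h3'.inv_tendsto_atTop
    refine h3''.congr fun z => ?_
    simp [norm_inv]
  have heq1 : vinf - uinf ^ 2 - 1 / 2 = 0 := by
    have hA : Tendsto (fun z => v z - u z ^ 2 - 1 / 2 - u z / (3 * z)) l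
        (𝓝 (vinf - uinf ^ 2 - 1 / 2 - uinf * 0)) := by
      have := ((hvL.sub (huL.pow 2)).sub (tendsto_const_nhds (x := (1/2 : ℂ)))).sub (huL.mul h3)
      exact this.congr fun z => by ring
    have := tendsto_nhds_unique hA hu'0
    rw [mul_zero, sub_zero] at this
    exact this
  have heq2 : 2 * uinf * vinf = 0 := by
    have hB : Tendsto (fun z => 2 * u z * v z + (2 * α + 1) / (3 * z) - 2 * v z / (3 * z)) l
        (𝓝 (2 * uinf * vinf + (2 * α + 1) * 0 - 2 * vinf * 0)) := by
      have := ((((tendsto_const_nhds (x := (2:ℂ))).mul huL).mul hvL).add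
        ((tendsto_const_nhds (x := (2*α+1 : ℂ))).mul h3)).sub
        (((tendsto_const_nhds (x := (2:ℂ))).mul hvL).mul h3)
      exact this.congr fun z => by ring
    have := tendsto_nhds_unique hB hv'0
    rw [mul_zero, mul_zero, add_zero, sub_zero] at this
    exact this
  refine ⟨uinf, vinf, huL, hvL, heq1, heq2, ?_⟩
  rcases mul_eq_zero.1 heq2 with h | hV
  · have hU : uinf = 0 := by
      rcases mul_eq_zero.1 h with h2 | h2
      · exact absurd h2 (by norm_num)
      · exact h2
    left
    have : vinf = 1 / 2 := by
      rw [hU] at heq1; linear_combination heq1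
    rw [hU, this]
  · have hu2 : uinf ^ 2 = -(1 / 2) := by
      rw [hV] at heq1; linear_combination -heq1
    set c : ℂ := Complex.I / (Real.sqrt 2 : ℂ) with hc
    have hs2 : ((Real.sqrt 2 : ℝ) : ℂ) ^ 2 = 2 := by
      rw [← Complex.ofReal_pow, Real.sq_sqrt (by norm_num : (0:ℝ) ≤ 2)]
      norm_num
    have hc2 : c ^ 2 = -(1 / 2) := by
      rw [hc, div_pow, Complex.I_sq, hs2]
      norm_num
    have hfac : (uinf - c) * (uinf + c) = 0 := by
      have : (uinf - c) * (uinf + c) = uinf ^ 2 - c ^ 2 := by ring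
      rw [this, hu2, hc2, sub_self]
    rcases mul_eq_zero.1 hfac with h2 | h2
    · right; left
      rw [sub_eq_zero] at h2
      rw [h2, hV]
    · right; right
      rw [add_eq_zero_iff_eq_neg] at h2
      rw [h2, hV]
end
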